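/- For every real number γ with 0 < γ < 1 and every natural number k, γ^k / (∑_{i=0}^{k} γ^i) ≤ ((γ⁻¹ - γ)(1 + γ - γ^(k+1)))/((γ^(k+1))⁻¹ - γ^(k+1)) and ((γ⁻¹ - γ)(1 + γ - γ^(k+1)))/((γ^(k+1))⁻¹ - γ^(k+1)) ≤ 4 γ^k / (∑_{i=0}^{k} γ^i). -/

import Mathlib

theorem stmt_2 (γ : ℝ) (hγ0 : 0 < γ) (hγ1 : γ < 1) (k : ℕ) :
    γ^k / (∑ i ∈ Finset.range (k+1), γ^i)
        ≤ ((γ⁻¹ - γ) * (1 + γ - γ^(k+1))) / ((γ^(k+1))⁻¹ - γ^(k+1)) ∧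
    ((γ⁻¹ - γ) * (1 + γ - γ^(k+1))) / ((γ^(k+1))⁻¹ - γ^(k+1))
        ≤ 4 * γ^k / (∑ i ∈ Finset.range (k+1), γ^i) := by
  have hγ1' : γ ≠ 1 := ne_of_lt hγ1
  have ha : 0 < γ^k := pow_pos hγ0 k
  have ha1 : γ^k ≤ 1 := pow_le_one₀ hγ0.le hγ1.le
  have ht : 0 < γ^(k+1) := pow_pos hγ0 _
  have ht1 : γ^(k+1) < 1 := pow_lt_one₀ hγ0.le hγ1 (Nat.succ_ne_zero k)
  have hS : (0:ℝ) < ∑ i ∈ Finset.range (k+1), γ^i := by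
    apply Finset.sum_pos (fun i _ => pow_pos hγ0 i)
    exact ⟨0, Finset.mem_range.mpr (Nat.succ_pos k)⟩
  have hSeq : (∑ i ∈ Finset.range (k+1), γ^i) * (1-γ) = 1 - γ^(k+1) := by
    linear_combination -(geom_sum_mul γ (k+1))
  have hD : 0 < (γ^(k+1))⁻¹ - γ^(k+1) := by
    have : 1 < (γ^(k+1))⁻¹ := (one_lt_inv₀ ht).mpr ht1
    linarith
  rw [pow_succ] at hD hSeq ht ht1 ⊢
  set S := ∑ i ∈ Finset.range (k+1), γ^i with hSdef
  set a := γ^k with hadef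
  have hinv : (a*γ)⁻¹ - a*γ = (1 - (a*γ)^2)/(a*γ) := by
    field_simp
  have hinvγ : γ⁻¹ - γ = (1 - γ^2)/γ := by
    field_simp
  constructor
  · rw [div_le_div_iff₀ hS hD, hinv, hinvγ,
      show a*((1 - (a*γ)^2)/(a*γ)) = (a*(1 - (a*γ)^2))/(a*γ) from by ring,
      show (1-γ^2)/γ*(1+γ-a*γ)*S = ((1-γ^2)*(1+γ-a*γ)*S)/γ from by ring,
      div_le_div_iff₀ ht hγ0]
    have hx : a*γ ≤ γ := mul_le_of_le_one_left hγ0.le ha1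
    have hr : 1 + a*γ ≤ (1+γ)*(1+γ-a*γ) := by
      nlinarith [mul_nonneg (sub_nonneg.mpr hx) (by linarith : (0:ℝ) ≤ 2+γ)]
    have heq : (1-γ^2)*S = (1+γ)*(1-a*γ) := by linear_combination (1+γ)*hSeq
    have heq2 : (1-γ^2)*(1+γ-a*γ)*S*(a*γ) = (1+γ)*(1-a*γ)*(1+γ-a*γ)*(a*γ) := by
      linear_combination ((1+γ-a*γ)*(a*γ))*heq
    have hm := mul_le_mul_of_nonneg_left hr (mul_nonneg ht.le (sub_nonneg.mpr ht1.le))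
    nlinarith [heq2, hm]
  · rw [div_le_div_iff₀ hD hS, hinv, hinvγ,
      show (1-γ^2)/γ*(1+γ-a*γ)*S = ((1-γ^2)*(1+γ-a*γ)*S)/γ from by ring,
      show 4*a*((1 - (a*γ)^2)/(a*γ)) = (4*a*(1 - (a*γ)^2))/(a*γ) from by ring,
      div_le_div_iff₀ hγ0 ht]
    have h4 : (1+γ)*(1+γ-a*γ) ≤ 4*(1+a*γ) := by
      nlinarith [mul_nonneg (le_of_lt (by linarith : (0:ℝ) < 1+γ)) ht.le,
        mul_nonneg (sub_nonneg.mpr hγ1.le) (by linarith : (0:ℝ) ≤ 3+γ)]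
    have heq : (1-γ^2)*S = (1+γ)*(1-a*γ) := by linear_combination (1+γ)*hSeq
    have heq2 : (1-γ^2)*(1+γ-a*γ)*S*(a*γ) = (1+γ)*(1-a*γ)*(1+γ-a*γ)*(a*γ) := by
      linear_combination ((1+γ-a*γ)*(a*γ))*heq
    have hm := mul_le_mul_of_nonneg_left h4 (mul_nonneg ht.le (sub_nonneg.mpr ht1.le))
    nlinarith [heq2, hm]
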